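/- The point u* = (1/N)·1 is the unique fixed point of the replicator dynamics with payoff A_N(γ) = L_N + γ M_N in the interior of the simplex Δ_N: if u ∈ int(Δ_N) satisfies (e_i − u)ᵀ A_N(γ) u = 0 for all i, then u = (1/N)·1. -/

import Mathlib

/-- The skew-symmetric circulant payoff matrix of the complete odd circulant game:
first row `(0, -1, 1, -1, 1, …, -1, 1)`, each row a cyclic shift of the previous. -/
noncomputable def Lmat (N : ℕ) : Matrix (Fin N) (Fin N) ℝ :=
  Matrix.of fun i j => if i = j then 0 else (-1 : ℝ) ^ ((j.val + N - i.val) % N)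

/-- The 0-1 circulant tournament matrix: first row has ones exactly at positions
`3, 5, …, N` (1-indexed), i.e. at even nonzero cyclic offsets. -/
noncomputable def Mmat (N : ℕ) : Matrix (Fin N) (Fin N) ℝ :=
  Matrix.of fun i j =>
    if i ≠ j ∧ Even ((j.val + N - i.val) % N) then (1 : ℝ) else 0

/-- The `N × N` all-ones matrix. -/
noncomputable def onesMat (N : ℕ) : Matrix (Fin N) (Fin N) ℝ := Matrix.of fun _ _ => (1 : ℝ)

/-- `H = (1/N²)(N(M_N − 1_N) + 1_N)`, the Jacobian of the controlled part of the
replicator dynamics at the interior equilibrium. -/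
noncomputable def Hmat (N : ℕ) : Matrix (Fin N) (Fin N) ℝ :=
  ((1 : ℝ) / (N : ℝ) ^ 2) • ((N : ℝ) • (Mmat N - onesMat N) + onesMat N)

lemma entryA (N : ℕ) (γ : ℝ) (i j : Fin N) :
    (Lmat N + γ • Mmat N) i j =
      if i = j then 0 else if Even ((j.val + N - i.val) % N) then 1 + γ else -1 := by
  simp only [Lmat, Mmat, Matrix.add_apply, Matrix.smul_apply, Matrix.of_apply, smul_eq_mul]
  by_cases h : i = j
  · simp [h]
  · by_cases he : Even ((j.val + N - i.val) % N)
    · simp [h, he, he.neg_one_pow]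
    · simp [h, he, (Nat.not_even_iff_odd.1 he).neg_one_pow]

lemma off_eq (N a b : ℕ) (ha : a < N) (hb : b < N) :
    (b + N - a) % N = if a ≤ b then b - a else b + N - a := by
  split
  · next h =>
    have : b + N - a = (b - a) + N := by omega
    rw [this, Nat.add_mod_right, Nat.mod_eq_of_lt (by omega)]
  · exact Nat.mod_eq_of_lt (by omega)

lemma off_add (N : ℕ) (a d : ℕ) (ha : a < N) (hd : d < N) :
    ((a + d) % N + N - a) % N = d := by
  rcases Nat.lt_or_ge (a + d) N with h | h
  · rw [Nat.mod_eq_of_lt h, off_eq N a (a+d) ha h, if_pos (by omega)]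
    omega
  · have h2 : (a + d) % N = a + d - N := by
      rw [Nat.mod_eq_sub_mod h, Nat.mod_eq_of_lt (by omega)]
    rw [h2, off_eq N a (a+d-N) ha (by omega), if_neg (by omega)]
    omega

lemma val_two (N : ℕ) [NeZero N] (hN : 3 ≤ N) : ((2 : Fin N)).val = 2 := by
  have : ((2 : Fin N)).val = 2 % N := rfl
  rw [this, Nat.mod_eq_of_lt (by omega)]

lemma val_one (N : ℕ) [NeZero N] (hN : 2 ≤ N) : ((1 : Fin N)).val = 1 := by
  rw [Fin.val_one', Nat.mod_eq_of_lt (by omega)]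

lemma sub_two_val (N : ℕ) [NeZero N] (hN : 3 ≤ N) (d : Fin N) :
    (d - 2).val = (d.val + N - 2) % N := by
  rw [Fin.sub_def]
  simp only [val_two N hN]
  congr 1
  omega

lemma Pkey (N : ℕ) [NeZero N] (hN : 3 ≤ N) (hodd : N % 2 = 1) (γ : ℝ) (d : Fin N) :
    (Lmat N + γ • Mmat N) 0 d - (Lmat N + γ • Mmat N) 0 (d - 2) =
      (if d = 0 then 1 else 0) - (2 + γ) * (if d = 1 then 1 else 0)
        + (1 + γ) * (if d = 2 then 1 else 0) := by
  have hd := d.isLt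
  have hz : ((0 : Fin N)).val = 0 := rfl
  have hoff1 : (d.val + N - (0 : Fin N).val) % N = d.val := by
    rw [hz, Nat.sub_zero, Nat.add_mod_right, Nat.mod_eq_of_lt hd]
  have hs2 := sub_two_val N hN d
  have hmod : (d.val + N - 2) % N = if 2 ≤ d.val then d.val - 2 else d.val + N - 2 := by
    split
    · rw [show d.val + N - 2 = (d.val - 2) + N by omega, Nat.add_mod_right,
        Nat.mod_eq_of_lt (by omega)]
    · exact Nat.mod_eq_of_lt (by omega)
  have hoff2 : ((d - 2).val + N - (0 : Fin N).val) % N =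
      if 2 ≤ d.val then d.val - 2 else d.val + N - 2 := by
    rw [hz, Nat.sub_zero, Nat.add_mod_right, hs2, Nat.mod_mod_of_dvd _ dvd_rfl, hmod]
  rw [entryA, entryA, hoff1, hoff2]
  simp only [Fin.ext_iff, hz, hs2, hmod, val_one N (by omega : 2 ≤ N), val_two N hN,
    Nat.even_iff]
  split_ifs <;> first | ring1 | (exfalso; omega)

lemma circA (N : ℕ) [NeZero N] (γ : ℝ) (i d : Fin N) :
    (Lmat N + γ • Mmat N) i (i + d) = (Lmat N + γ • Mmat N) 0 d := by
  rw [entryA, entryA]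
  have h1 : ((i + d).val + N - i.val) % N = d.val := by
    rw [Fin.val_add]; exact off_add N i.val d.val i.isLt d.isLt
  have h2 : (d.val + N - (0 : Fin N).val) % N = d.val := by
    rw [show ((0 : Fin N)).val = 0 from rfl, Nat.sub_zero, Nat.add_mod_right,
      Nat.mod_eq_of_lt d.isLt]
  have e1 : (i = i + d) ↔ ((0 : Fin N) = d) := by
    simp [left_eq_add, eq_comm]
  rw [h1, h2]
  exact if_congr e1 rfl rfl

lemma keyLemma (N : ℕ) [NeZero N] (hN : 3 ≤ N) (hodd : N % 2 = 1) (γ : ℝ)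
    (u : Fin N → ℝ) (i : Fin N) :
    (Lmat N + γ • Mmat N).mulVec u i - (Lmat N + γ • Mmat N).mulVec u (i + 2) =
      u i - (2 + γ) * u (i + 1) + (1 + γ) * u (i + 2) := by
  classical
  set A := Lmat N + γ • Mmat N with hA
  have hshift : ∀ j : Fin N, A.mulVec u j = ∑ d : Fin N, A 0 d * u (j + d) := by
    intro j
    rw [Matrix.mulVec, dotProduct,
      ← Equiv.sum_comp (Equiv.addLeft j) (fun x => A j x * u x)]
    refine Finset.sum_congr rfl fun d _ => ?_
    show A j (j + d) * u (j + d) = _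
    rw [hA, circA N γ j d]
  have h2 : A.mulVec u (i + 2) = ∑ d : Fin N, A 0 (d - 2) * u (i + d) := by
    rw [hshift (i + 2), ← Equiv.sum_comp (Equiv.subRight (2 : Fin N))
      (fun d => A 0 d * u (i + 2 + d))]
    refine Finset.sum_congr rfl fun d _ => ?_
    show A 0 (d - 2) * u (i + 2 + (d - 2)) = _
    congr 1
    congr 1
    abel
  rw [hshift i, h2, ← Finset.sum_sub_distrib]
  have hterm : ∀ d : Fin N, A 0 d * u (i + d) - A 0 (d - 2) * u (i + d) =
      ((if d = 0 then (1:ℝ) else 0) - (2 + γ) * (if d = 1 then 1 else 0)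
        + (1 + γ) * (if d = 2 then 1 else 0)) * u (i + d) := by
    intro d
    rw [← sub_mul, Pkey N hN hodd γ d]
  rw [Finset.sum_congr rfl (fun d _ => hterm d)]
  simp only [sub_mul, add_mul, ite_mul, one_mul, zero_mul, mul_ite, mul_zero, mul_one,
    Finset.sum_add_distrib, Finset.sum_sub_distrib, Finset.sum_ite_eq', Finset.mem_univ,
    if_true]
  rw [add_zero]

open Fin.NatCast in
lemma mainAux (N : ℕ) [NeZero N] (hN3 : 3 ≤ N) (hNodd : N % 2 = 1) (γ : ℝ)
    (hγ : γ > -1) (u : Fin N → ℝ) (hsum : ∑ i, u i = 1)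
    (hfix : ∀ i : Fin N,
      dotProduct (Pi.single i 1 - u) ((Lmat N + γ • Mmat N).mulVec u) = 0) :
    ∀ i, u i = 1 / (N : ℝ) := by
  classical
  set A := Lmat N + γ • Mmat N with hA
  set w := A.mulVec u with hw
  have hγ1 : (0:ℝ) < 1 + γ := by linarith
  have hc : ∀ i, w i = dotProduct u w := by
    intro i
    have h := hfix i
    rw [sub_dotProduct, single_dotProduct, one_mul] at h
    linarith
  have hrec : ∀ i : Fin N, (1 + γ) * (u (i + 1 + 1) - u (i + 1)) = u (i + 1) - u i := by
    intro i
    have h0 := keyLemma N hN3 hNodd γ u i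
    rw [← hA, ← hw, (hc i).trans (hc (i + 2)).symm, sub_self] at h0
    have h2 : (i + 2 : Fin N) = i + 1 + 1 := by rw [add_assoc, one_add_one_eq_two]
    rw [h2] at h0
    linear_combination -h0
  set D : Fin N → ℝ := fun i => u (i + 1) - u i with hD
  set r := (1 + γ)⁻¹ with hr
  have hstep : ∀ i : Fin N, D (i + 1) = r * D i := by
    intro i
    have h := hrec i
    show u (i + 1 + 1) - u (i + 1) = r * (u (i + 1) - u i)
    rw [← h, hr]
    field_simp
  have hpow : ∀ k : ℕ, D (k : Fin N) = r ^ k * D 0 := by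
    intro k
    induction k with
    | zero => simp
    | succ m ih =>
      have hcast : ((m + 1 : ℕ) : Fin N) = (m : Fin N) + 1 := by push_cast; ring
      rw [hcast, hstep, ih, pow_succ]; ring
  have hsumD : ∑ i : Fin N, D i = 0 := by
    have hsh : ∑ i : Fin N, u (i + 1) = ∑ i : Fin N, u i := by
      rw [← Equiv.sum_comp (Equiv.addRight (1 : Fin N)) u]
      rfl
    simp only [hD]
    rw [Finset.sum_sub_distrib, hsh, sub_self]
  have hgeom : ∑ i : Fin N, D i = (∑ k ∈ Finset.range N, r ^ k) * D 0 := by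
    calc ∑ i : Fin N, D i = ∑ i : Fin N, r ^ (i.val) * D 0 := by
          refine Finset.sum_congr rfl fun i _ => ?_
          rw [← hpow i.val, Fin.cast_val_eq_self]
      _ = ∑ k ∈ Finset.range N, r ^ k * D 0 :=
          Fin.sum_univ_eq_sum_range (fun k => r ^ k * D 0) N
      _ = (∑ k ∈ Finset.range N, r ^ k) * D 0 := by rw [Finset.sum_mul]
  have hrpos : 0 < r := inv_pos.2 hγ1
  have hspos : 0 < ∑ k ∈ Finset.range N, r ^ k :=
    Finset.sum_pos (fun k _ => pow_pos hrpos k)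
      (Finset.nonempty_range_iff.2 (by omega))
  have hD0 : D 0 = 0 := by
    have hz : (∑ k ∈ Finset.range N, r ^ k) * D 0 = 0 := by rw [← hgeom, hsumD]
    rcases mul_eq_zero.1 hz with h | h
    · exact absurd h (ne_of_gt hspos)
    · exact h
  have hu1 : ∀ i : Fin N, u (i + 1) = u i := by
    intro i
    have h := hpow i.val
    rw [Fin.cast_val_eq_self, hD0, mul_zero] at h
    have h2 : u (i + 1) - u i = 0 := h
    linarith
  have huc : ∀ i : Fin N, u i = u 0 := by
    have hk : ∀ k : ℕ, u ((k : Fin N)) = u 0 := by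
      intro k
      induction k with
      | zero => simp
      | succ m ih =>
        rw [show ((m + 1 : ℕ) : Fin N) = (m : Fin N) + 1 by push_cast; ring, hu1, ih]
    intro i
    rw [← Fin.cast_val_eq_self i]
    exact hk i.val
  have hNval : (N : ℝ) * u 0 = 1 := by
    rw [← hsum]
    rw [Finset.sum_congr rfl (fun i _ => huc i), Finset.sum_const, Finset.card_univ,
      Fintype.card_fin, nsmul_eq_mul]
  have hNne : (N : ℝ) ≠ 0 := by positivity
  intro i
  rw [huc i]
  field_simp
  linarith

/-- `u* = (1/N)·1` is the unique interior fixed point: if `u` is in the interior of the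
simplex and `(e_i − u)ᵀ A_N(γ) u = 0` for all `i`, then `u = (1/N)·1`. -/
theorem stmt_10 (n : ℕ) (hn : 1 ≤ n) (γ : ℝ) (hγ : γ > -1)
    (u : Fin (2 * n + 1) → ℝ) (hsum : ∑ i, u i = 1) (hpos : ∀ i, 0 < u i)
    (hfix : ∀ i : Fin (2 * n + 1),
      dotProduct (Pi.single i 1 - u)
        ((Lmat (2 * n + 1) + γ • Mmat (2 * n + 1)).mulVec u) = 0) :
    u = fun _ => (1 : ℝ) / (2 * n + 1) := by
  have h := mainAux (2 * n + 1) (by omega) (by omega) γ hγ u hsum hfix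
  funext i
  rw [h i]
  norm_num
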